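/- Fix α > 0 and set T = 2/(π·√(1+α²)). There exists a constant c > 0, depending only on α, such that the following holds: for all real sequences (a_k)_{k≥1}, (b_k)_{k≥1}, (c_k)_{k≥1} with ∑_k k⁴ a_k² < ∞, ∑_k b_k² < ∞ and ∑_k c_k² < ∞, if for each k ≥ 1 the functions u_k ∈ C²(ℝ,ℝ) and θ_k ∈ C¹(ℝ,ℝ) satisfy u_k''(t) + k⁴π⁴ u_k(t) − α k²π² θ_k(t) = 0, θ_k'(t) + α k²π² u_k'(t) = 0, u_k(0) = a_k, u_k'(0) = b_k, θ_k(0) = c_k, then ∫₀^T ( ∑_{k=1}^∞ θ_k(t)² ) dt ≥ c · ∑_{k=1}^∞ ( k⁴π⁴ a_k² + b_k² + c_k² ). -/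

import Mathlib

open Real MeasureTheory


lemma cos_comp_deriv (ω : ℝ) (t : ℝ) :
    HasDerivAt (fun t : ℝ => cos (ω*t)) (-sin (ω*t) * ω) t := by
  simpa using HasDerivAt.cos ((hasDerivAt_id t).const_mul ω)

lemma sin_comp_deriv (ω : ℝ) (t : ℝ) :
    HasDerivAt (fun t : ℝ => sin (ω*t)) (cos (ω*t) * ω) t := by
  simpa using HasDerivAt.sin ((hasDerivAt_id t).const_mul ω)

lemma osc_sol (ω r : ℝ) (hω : 0 < ω) (u : ℝ → ℝ) (hu : ContDiff ℝ 2 u)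
    (hode : ∀ t, deriv (deriv u) t + ω^2 * u t = r) :
    ∀ t, u t = r/ω^2 + (u 0 - r/ω^2) * cos (ω*t) + (deriv u 0 / ω) * sin (ω*t) := by
  have hω2 : ω^2 ≠ 0 := by positivity
  have hud : Differentiable ℝ u := hu.differentiable (by norm_num)
  have hud2 : Differentiable ℝ (deriv u) := by
    have h2 : ContDiff ℝ (1+1) u := by norm_num at hu ⊢; exact hu
    exact ((contDiff_succ_iff_deriv.mp h2).2.2).differentiable (by norm_num)
  set A := u 0 - r/ω^2 with hA
  set B := deriv u 0 / ω with hB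
  set w : ℝ → ℝ := fun t => u t - r/ω^2 - A * cos (ω*t) - B * sin (ω*t) with hw
  set w' : ℝ → ℝ := fun t => deriv u t + A * ω * sin (ω*t) - B * ω * cos (ω*t) with hw'
  have hdw : ∀ t, HasDerivAt w (w' t) t := by
    intro t
    have h1 := (((hud t).hasDerivAt.sub_const (r/ω^2)).sub
      ((cos_comp_deriv ω t).const_mul A)).sub ((sin_comp_deriv ω t).const_mul B)
    have h2 : deriv u t - A * (-sin (ω*t) * ω) - B * (cos (ω*t) * ω) = w' t := by
      simp only [hw']; ring
    rw [h2] at h1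
    exact h1
  have hdw' : ∀ t, HasDerivAt w' (-ω^2 * w t) t := by
    intro t
    have h1 := (((hud2 t).hasDerivAt).add
      ((sin_comp_deriv ω t).const_mul (A*ω))).sub ((cos_comp_deriv ω t).const_mul (B*ω))
    have hshape : HasDerivAt w'
        (deriv (deriv u) t + A*ω * (cos (ω*t) * ω) - B*ω * (-sin (ω*t) * ω)) t := h1
    have h2 : deriv (deriv u) t + A*ω * (cos (ω*t) * ω) - B*ω * (-sin (ω*t) * ω)
        = -ω^2 * w t := by
      have h3 : deriv (deriv u) t = r - ω^2 * u t := by linarith [hode t]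
      simp only [hw, h3]
      field_simp
      ring
    rw [h2] at hshape
    exact hshape
  set h : ℝ → ℝ := fun t => (w' t)^2 + ω^2 * (w t)^2 with hh
  have hdh : ∀ t, HasDerivAt h 0 t := by
    intro t
    have h1 := ((hdw' t).pow 2).add (((hdw t).pow 2).const_mul (ω^2))
    have h2 : (2:ℕ) * w' t ^ (2-1) * (-ω^2 * w t) + ω^2 * ((2:ℕ) * w t ^ (2-1) * w' t)
        = 0 := by push_cast; ring
    rw [h2] at h1
    exact h1
  have hconst : ∀ t, h t = h 0 :=
    fun t => is_const_of_deriv_eq_zero (fun x => (hdh x).differentiableAt)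
      (fun x => (hdh x).deriv) t 0
  have hw0 : w 0 = 0 := by simp [hw, hA]
  have hw'0 : w' 0 = 0 := by
    simp only [hw', hB, mul_zero, Real.sin_zero, Real.cos_zero]
    field_simp
    ring
  have hh0 : h 0 = 0 := by simp [hh, hw0, hw'0]
  intro t
  have ht : (w' t)^2 + ω^2 * (w t)^2 = 0 := by
    have := hconst t; rw [hh0] at this; exact this
  have hwt2 : (w t)^2 = 0 := by nlinarith [sq_nonneg (w' t), pow_pos hω 2, sq_nonneg (w t)]
  have hwt : w t = 0 := (pow_eq_zero_iff two_ne_zero).mp hwt2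
  have : u t - r/ω^2 - A * cos (ω*t) - B * sin (ω*t) = 0 := hwt
  linarith

lemma theta_form (α μ : ℝ) (hα : 0 < α) (hμ : 0 < μ) (u θ : ℝ → ℝ)
    (hu : ContDiff ℝ 2 u) (hθ : ContDiff ℝ 1 θ)
    (hode1 : ∀ t, deriv (deriv u) t + μ^2 * u t - α * μ * θ t = 0)
    (hode2 : ∀ t, deriv θ t + α * μ * deriv u t = 0) :
    ∀ t, θ t = (α*μ*u 0 + θ 0)/(1+α^2)
      + (-(α*(μ*u 0 - α*θ 0)/(1+α^2))) * cos (μ*Real.sqrt (1+α^2)*t)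
      + (-(α*(deriv u 0)/Real.sqrt (1+α^2))) * sin (μ*Real.sqrt (1+α^2)*t) := by
  have hud : Differentiable ℝ u := hu.differentiable (by norm_num)
  have hθd : Differentiable ℝ θ := hθ.differentiable (by norm_num)
  set q := Real.sqrt (1+α^2) with hqdef
  have hq0 : 0 < q := Real.sqrt_pos.mpr (by positivity)
  have hq2 : q^2 = 1 + α^2 := Real.sq_sqrt (by positivity)
  set ω := μ * q with hωdef
  have hω0 : 0 < ω := by positivity
  have hω2 : ω^2 = μ^2 * (1+α^2) := by rw [hωdef, mul_pow, hq2]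
  set s := α*μ*u 0 + θ 0 with hs
  -- invariant
  have hinv : ∀ t, θ t = s - α*μ*u t := by
    have hg : ∀ t : ℝ, θ t + α*μ*u t = θ 0 + α*μ*u 0 := by
      intro t
      have hdg : ∀ x : ℝ, HasDerivAt (fun t => θ t + α*μ*u t) 0 x := by
        intro x
        have h1 := (hθd x).hasDerivAt.add (((hud x).hasDerivAt).const_mul (α*μ))
        have h2 : deriv θ x + α*μ * deriv u x = 0 := by linarith [hode2 x]
        rw [h2] at h1; exact h1
      exact is_const_of_deriv_eq_zero (fun x => (hdg x).differentiableAt)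
        (fun x => (hdg x).deriv) t 0
    intro t
    have := hg t
    simp only [hs]; linarith
  -- forced oscillator for u
  have hode : ∀ t, deriv (deriv u) t + ω^2 * u t = α*μ*s := by
    intro t
    have h1 := hode1 t
    have h2 := hinv t
    rw [hω2]
    linear_combination h1 + (α*μ) * h2
  have husol := osc_sol ω (α*μ*s) hω0 u hu hode
  intro t
  rw [hinv t, husol t]
  have hμ0 : μ ≠ 0 := ne_of_gt hμ
  have hq0' : q ≠ 0 := ne_of_gt hq0
  have h1α : (1:ℝ) + α^2 ≠ 0 := by positivity
  rw [hω2, hωdef]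
  rw [(hinv 0)]
  field_simp
  nlinarith [hq2, sq_nonneg q, Real.sin_sq_add_cos_sq (μ*q*t)]
lemma integral_sq (ω C D E T : ℝ) (hω : 0 < ω)
    (hsin : Real.sin (ω*T) = 0) (hcos : Real.cos (ω*T) = 1) :
    ∫ t in (0:ℝ)..T, (C + D*Real.cos (ω*t) + E*Real.sin (ω*t))^2
      = C^2*T + (D^2+E^2)*(T/2) := by
  have hω0 : ω ≠ 0 := ne_of_gt hω
  set Φ : ℝ → ℝ := fun t => C^2*t + (2*C*D/ω)*Real.sin (ω*t) - (2*C*E/ω)*Real.cos (ω*t)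
    + ((D^2+E^2)/2)*t + ((D^2-E^2)/(2*ω))*(Real.sin (ω*t)*Real.cos (ω*t))
    - (D*E/ω)*(Real.cos (ω*t))^2 with hΦ
  have hd : ∀ t : ℝ, HasDerivAt Φ ((C + D*Real.cos (ω*t) + E*Real.sin (ω*t))^2) t := by
    intro t
    have h1 := (((((((hasDerivAt_id t).const_mul (C^2)).add
      ((sin_comp_deriv ω t).const_mul (2*C*D/ω))).sub
      ((cos_comp_deriv ω t).const_mul (2*C*E/ω))).add
      ((hasDerivAt_id t).const_mul ((D^2+E^2)/2))).add
      (((sin_comp_deriv ω t).mul (cos_comp_deriv ω t)).const_mul ((D^2-E^2)/(2*ω)))).sub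
      (((cos_comp_deriv ω t).pow 2).const_mul (D*E/ω)))
    refine h1.congr_deriv (Eq.symm ?_)
    have hpy := Real.sin_sq_add_cos_sq (ω*t)
    field_simp
    push_cast
    linear_combination (D^2+E^2) * hpy
  have hcont : Continuous fun t => (C + D*Real.cos (ω*t) + E*Real.sin (ω*t))^2 := by
    fun_prop
  have := intervalIntegral.integral_eq_sub_of_hasDerivAt
    (f := Φ) (fun x _ => hd x) (hcont.intervalIntegrable 0 T)
  rw [this]
  simp only [hΦ, mul_zero, Real.sin_zero, Real.cos_zero]
  rw [hsin, hcos]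
  ring
lemma key_poly (α X Y B : ℝ) (hα : 0 < α) :
    α^2*(X^2+Y^2+B^2) ≤ 2*(α*X+Y)^2 + α^2*(X-α*Y)^2 + α^2*(1+α^2)*B^2 := by
  nlinarith [sq_nonneg (2*α^2*X + (2*α - α^3)*Y), sq_nonneg (α^2*Y), sq_nonneg (α^3*Y),
    sq_nonneg (α^2*B), sq_nonneg (α*B), mul_pos hα hα]

lemma coef_bound (α X Y B q : ℝ) (hα : 0 < α) (hq : q^2 = 1+α^2) (hq0 : 0 < q) :
    ((α*X+Y)/(1+α^2))^2 + (-(α*(X-α*Y)/(1+α^2)))^2 + (-(α*B/q))^2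
      ≤ (2+5*α^2+2*α^4)*(X^2+Y^2+B^2) := by
  have h1 : (1:ℝ) ≤ (1+α^2)^2 := by nlinarith [sq_nonneg α]
  have e1 : ((α*X+Y)/(1+α^2))^2 = (α*X+Y)^2/((1+α^2)^2) := by rw [div_pow]
  have e2 : (-(α*(X-α*Y)/(1+α^2)))^2 = (α*(X-α*Y))^2/((1+α^2)^2) := by
    rw [neg_sq, div_pow]
  have e3 : (-(α*B/q))^2 = (α*B)^2/(1+α^2) := by
    rw [neg_sq, div_pow, hq]
  rw [e1, e2, e3]
  have b1 : (α*X+Y)^2/((1+α^2)^2) ≤ (α*X+Y)^2 := div_le_self (sq_nonneg _) h1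
  have b2 : (α*(X-α*Y))^2/((1+α^2)^2) ≤ (α*(X-α*Y))^2 := div_le_self (sq_nonneg _) h1
  have b3 : (α*B)^2/(1+α^2) ≤ (α*B)^2 := div_le_self (sq_nonneg _) (by nlinarith [sq_nonneg α])
  nlinarith [sq_nonneg (α*X), sq_nonneg Y, sq_nonneg (α^2*Y), sq_nonneg X, sq_nonneg B,
    sq_nonneg (X-Y), sq_nonneg (X+Y), sq_nonneg α, sq_nonneg (α*X - Y), sq_nonneg (α*X + Y)]

lemma theta_sq_bound (C D E c s : ℝ) (hc : c^2 ≤ 1) (hs : s^2 ≤ 1) :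
    (C + D*c + E*s)^2 ≤ 3*(C^2 + D^2 + E^2) := by
  nlinarith [sq_nonneg (C - D*c), sq_nonneg (C - E*s), sq_nonneg (D*c - E*s),
    sq_nonneg (D*c), sq_nonneg (E*s), sq_nonneg C]
theorem thermoelastic_observability (α : ℝ) (hα : 0 < α)
    (T : ℝ) (hT : T = 2 / (π * Real.sqrt (1 + α ^ 2))) :
    ∃ c > (0:ℝ), ∀ (a b d : ℕ → ℝ) (u θ : ℕ → ℝ → ℝ),
      Summable (fun k : ℕ => ((k : ℝ) + 1) ^ 4 * (a k) ^ 2) →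
      Summable (fun k : ℕ => (b k) ^ 2) →
      Summable (fun k : ℕ => (d k) ^ 2) →
      (∀ k : ℕ, ContDiff ℝ 2 (u k)) →
      (∀ k : ℕ, ContDiff ℝ 1 (θ k)) →
      (∀ (k : ℕ) (t : ℝ),
        iteratedDeriv 2 (u k) t + ((k : ℝ) + 1) ^ 4 * π ^ 4 * u k t
          - α * ((k : ℝ) + 1) ^ 2 * π ^ 2 * θ k t = 0) →
      (∀ (k : ℕ) (t : ℝ),
        deriv (θ k) t + α * ((k : ℝ) + 1) ^ 2 * π ^ 2 * deriv (u k) t = 0) →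
      (∀ k : ℕ, u k 0 = a k ∧ deriv (u k) 0 = b k ∧ θ k 0 = d k) →
      (∫ t in (0:ℝ)..T, ∑' k : ℕ, (θ k t) ^ 2)
        ≥ c * ∑' k : ℕ,
            (((k : ℝ) + 1) ^ 4 * π ^ 4 * (a k) ^ 2 + (b k) ^ 2 + (d k) ^ 2) := by
  have hπ : (0:ℝ) < π := Real.pi_pos
  set q := Real.sqrt (1 + α ^ 2) with hqdef
  have hq0 : 0 < q := Real.sqrt_pos.mpr (by positivity)
  have hq2 : q^2 = 1 + α^2 := Real.sq_sqrt (by positivity)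
  have hT0 : 0 < T := by rw [hT]; positivity
  set c0 : ℝ := T * α^2 / (2*(1+α^2)^2) with hc0def
  have hc00 : 0 < c0 := by positivity
  refine ⟨c0, hc00, ?_⟩
  intro a b d u θ ha hb hd hu hθ hode1 hode2 hinit
  set μ : ℕ → ℝ := fun k => ((k:ℝ)+1)^2 * π^2 with hμdef
  have hμ0 : ∀ k, 0 < μ k := fun k => by positivity
  set ω : ℕ → ℝ := fun k => μ k * q with hωdef
  set C : ℕ → ℝ := fun k => (α * μ k * a k + d k)/(1+α^2) with hCdef
  set D : ℕ → ℝ := fun k => -(α*(μ k * a k - α * d k)/(1+α^2)) with hDdef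
  set E : ℕ → ℝ := fun k => -(α * b k / q) with hEdef
  set Ek : ℕ → ℝ := fun k => ((k:ℝ)+1)^4 * π^4 * (a k)^2 + (b k)^2 + (d k)^2 with hEkdef
  -- solution form
  have hform : ∀ k t, θ k t = C k + D k * Real.cos (ω k * t) + E k * Real.sin (ω k * t) := by
    intro k t
    have h1 : ∀ s, deriv (deriv (u k)) s + (μ k)^2 * u k s - α * (μ k) * θ k s = 0 := by
      intro s
      have h := hode1 k s
      rw [show iteratedDeriv 2 (u k) = deriv (deriv (u k)) by
        rw [iteratedDeriv_succ, iteratedDeriv_one]] at h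
      simp only [hμdef]
      linear_combination h
    have h2 : ∀ s, deriv (θ k) s + α * (μ k) * deriv (u k) s = 0 := by
      intro s
      have h := hode2 k s
      simp only [hμdef]
      linear_combination h
    have := theta_form α (μ k) hα (hμ0 k) (u k) (θ k) (hu k) (hθ k) h1 h2 t
    rw [this, (hinit k).1, (hinit k).2.1, (hinit k).2.2]
  -- trig values at T
  have hωT : ∀ k, ω k * T = ((k+1)^2 : ℕ) * (2 * π) := by
    intro k
    rw [hωdef, hμdef, hT]
    push_cast
    field_simp
  have hcosT : ∀ k, Real.cos (ω k * T) = 1 := by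
    intro k; rw [hωT k]; exact Real.cos_nat_mul_two_pi _
  have hsinT : ∀ k, Real.sin (ω k * T) = 0 := by
    intro k
    rw [hωT k, show (((k+1)^2 : ℕ):ℝ) * (2*π) = ((2*(k+1)^2 : ℕ):ℝ) * π by push_cast; ring]
    exact Real.sin_nat_mul_pi _
  -- per-mode integral identity
  have hω0 : ∀ k, 0 < ω k := fun k => by
    have := hμ0 k; rw [hωdef]; positivity
  have hint : ∀ k, ∫ t in (0:ℝ)..T, (θ k t)^2
      = (C k)^2*T + ((D k)^2+(E k)^2)*(T/2) := by
    intro k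
    rw [intervalIntegral.integral_congr (g := fun t =>
      (C k + D k * Real.cos (ω k * t) + E k * Real.sin (ω k * t))^2)
      (fun t _ => by rw [hform k t])]
    exact integral_sq (ω k) (C k) (D k) (E k) T (hω0 k) (hsinT k) (hcosT k)
  -- per-mode lower bound
  have hmode : ∀ k, c0 * Ek k ≤ ∫ t in (0:ℝ)..T, (θ k t)^2 := by
    intro k
    rw [hint k]
    have hkey := key_poly α (μ k * a k) (d k) (b k) hα
    have hEk : Ek k = (μ k * a k)^2 + (d k)^2 + (b k)^2 := by
      simp only [hEkdef, hμdef]; ring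
    have hE2 : (E k)^2 = α^2*(b k)^2/(1+α^2) := by
      simp only [hEdef]
      rw [neg_sq, div_pow, hq2]
      ring_nf
    calc c0 * Ek k = T/(2*(1+α^2)^2) * (α^2*((μ k * a k)^2 + (d k)^2 + (b k)^2)) := by
          rw [hEk, hc0def]; ring
      _ ≤ T/(2*(1+α^2)^2) * (2*(α*(μ k * a k)+ d k)^2 + α^2*(μ k * a k - α*(d k))^2
            + α^2*(1+α^2)*(b k)^2) := by
          apply mul_le_mul_of_nonneg_left _ (by positivity)
          calc α^2*((μ k * a k)^2 + (d k)^2 + (b k)^2)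
              = α^2*((μ k * a k)^2 + (d k)^2 + (b k)^2) := rfl
            _ ≤ _ := key_poly α (μ k * a k) (d k) (b k) hα
      _ = (C k)^2*T + ((D k)^2+(E k)^2)*(T/2) := by
          rw [hE2]
          simp only [hCdef, hDdef]
          have h1α : (1:ℝ)+α^2 ≠ 0 := by positivity
          field_simp
          ring
  -- summability of energy
  have SE : Summable Ek := by
    have S1 : Summable (fun k : ℕ => ((k:ℝ)+1)^4 * π^4 * (a k)^2) := by
      have := ha.mul_left (π^4)
      exact this.congr (fun k => by ring)
    exact (S1.add hb).add hd
  -- uniform bound on θ k t ^ 2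
  have hbound : ∀ k t, (θ k t)^2 ≤ 3*(2+5*α^2+2*α^4) * Ek k := by
    intro k t
    rw [hform k t]
    calc (C k + D k * Real.cos (ω k * t) + E k * Real.sin (ω k * t))^2
        ≤ 3*((C k)^2 + (D k)^2 + (E k)^2) :=
          theta_sq_bound _ _ _ _ _ (Real.cos_sq_le_one _) (Real.sin_sq_le_one _)
      _ ≤ 3*(2+5*α^2+2*α^4) * Ek k := by
          have h := coef_bound α (μ k * a k) (d k) (b k) q hα hq2 hq0
          have hEk : Ek k = (μ k * a k)^2 + (d k)^2 + (b k)^2 := by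
            simp only [hEkdef, hμdef]; ring
          rw [hEk]
          simp only [hCdef, hDdef, hEdef]
          rw [mul_assoc α (μ k) (a k)]
          linarith [h]
  have hbd_sum : Summable (fun k => 3*(2+5*α^2+2*α^4) * Ek k) := SE.mul_left _
  have hθsummable : ∀ t, Summable (fun k => (θ k t)^2) := by
    intro t
    exact Summable.of_nonneg_of_le (fun k => sq_nonneg _) (fun k => hbound k t) hbd_sum
  have hθcont : ∀ k, Continuous (fun t => (θ k t)^2) :=
    fun k => ((hθ k).continuous).pow 2
  have hΘcont : Continuous (fun t => ∑' k, (θ k t)^2) := by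
    apply continuous_tsum hθcont hbd_sum
    intro k t
    rw [Real.norm_eq_abs, abs_of_nonneg (sq_nonneg _)]
    exact hbound k t
  have hΘint : IntervalIntegrable (fun t => ∑' k, (θ k t)^2) volume 0 T :=
    hΘcont.intervalIntegrable 0 T
  -- finite sums
  have key : ∀ F : Finset ℕ, ∑ k ∈ F, c0 * Ek k
      ≤ ∫ t in (0:ℝ)..T, ∑' k, (θ k t)^2 := by
    intro F
    have h1 : ∑ k ∈ F, c0 * Ek k ≤ ∑ k ∈ F, ∫ t in (0:ℝ)..T, (θ k t)^2 :=
      Finset.sum_le_sum (fun k _ => hmode k)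
    have h2 : ∑ k ∈ F, ∫ t in (0:ℝ)..T, (θ k t)^2
        = ∫ t in (0:ℝ)..T, ∑ k ∈ F, (θ k t)^2 :=
      (intervalIntegral.integral_finset_sum
        (fun k _ => (hθcont k).intervalIntegrable 0 T)).symm
    have h3 : ∫ t in (0:ℝ)..T, ∑ k ∈ F, (θ k t)^2
        ≤ ∫ t in (0:ℝ)..T, ∑' k, (θ k t)^2 := by
      apply intervalIntegral.integral_mono_on hT0.le
        ((continuous_finset_sum F (fun k _ => hθcont k)).intervalIntegrable 0 T) hΘint
      intro t _
      exact Summable.sum_le_tsum F (fun k _ => sq_nonneg _) (hθsummable t)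
    linarith
  rw [ge_iff_le, ← tsum_mul_left]
  exact Summable.tsum_le_of_sum_le (SE.mul_left c0) key
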